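/- In the group algebra C[S_n] with a parameter ℏ ∈ C, the following identity holds for any distinct a,i,j ∈ {1,...,n} and an indeterminate u: (1 - σ_{i,j})(u - ℏ + ℏσ_{a,i})(u + ℏσ_{a,j}) = (u - ℏ)(1 - σ_{i,j})(u + ℏσ_{a,i} + ℏσ_{a,j}). -/

import Mathlib

open Polynomial

private lemma lin_mul {R : Type*} [Ring R] (b d : R) :
    (X + C b) * (X + C d) = X ^ 2 + C (b + d) * X + C (b * d) := by
  rw [add_mul, mul_add, mul_add, Polynomial.X_mul_C d, map_add, map_mul, add_mul, sq]
  abel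

theorem stmt_6 (n : ℕ) (ℏ : ℂ) (a i j : Fin n)
    (hai : a ≠ i) (haj : a ≠ j) (hij : i ≠ j) :
    (1 - Polynomial.C (MonoidAlgebra.of ℂ (Equiv.Perm (Fin n)) (Equiv.swap i j)))
      * (Polynomial.X - Polynomial.C (algebraMap ℂ (MonoidAlgebra ℂ (Equiv.Perm (Fin n))) ℏ)
          + Polynomial.C (ℏ • MonoidAlgebra.of ℂ (Equiv.Perm (Fin n)) (Equiv.swap a i)))
      * (Polynomial.X + Polynomial.C (ℏ • MonoidAlgebra.of ℂ (Equiv.Perm (Fin n)) (Equiv.swap a j)))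
    = (Polynomial.X - Polynomial.C (algebraMap ℂ (MonoidAlgebra ℂ (Equiv.Perm (Fin n))) ℏ))
      * (1 - Polynomial.C (MonoidAlgebra.of ℂ (Equiv.Perm (Fin n)) (Equiv.swap i j)))
      * (Polynomial.X + Polynomial.C (ℏ • MonoidAlgebra.of ℂ (Equiv.Perm (Fin n)) (Equiv.swap a i))
          + Polynomial.C (ℏ • MonoidAlgebra.of ℂ (Equiv.Perm (Fin n)) (Equiv.swap a j))) := by
  set R := MonoidAlgebra ℂ (Equiv.Perm (Fin n)) with hR
  set s : R := MonoidAlgebra.of ℂ (Equiv.Perm (Fin n)) (Equiv.swap i j) with hs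
  set p : R := MonoidAlgebra.of ℂ (Equiv.Perm (Fin n)) (Equiv.swap a i) with hp
  set q : R := MonoidAlgebra.of ℂ (Equiv.Perm (Fin n)) (Equiv.swap a j) with hq
  set e : R := algebraMap ℂ R ℏ with he
  -- permutation identities
  have hperm : Equiv.swap a i * Equiv.swap a j = Equiv.swap i j * Equiv.swap a i := by
    rw [Equiv.mul_swap_eq_swap_mul, Equiv.swap_apply_left,
      Equiv.swap_apply_of_ne_of_ne haj.symm hij.symm]
  have hsp : s * p = p * q := by
    rw [hs, hp, hq, ← map_mul, ← map_mul, hperm]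
  have hss : s * s = 1 := by
    rw [hs, ← map_mul, Equiv.swap_mul_self, map_one]
  have hspq : s * (p * q) = p := by
    rw [← hsp, ← mul_assoc, hss, one_mul]
  have key : (1 - s) * (p * q + p) = 0 := by
    rw [sub_mul, one_mul, mul_add, hspq, hsp]; abel
  -- polynomial rearrangements
  have h1 : (1 : R[X]) - C s = C (1 - s) := by rw [map_sub, map_one]
  have h2 : (X : R[X]) - C e + C (ℏ • p) = X + C (ℏ • p - e) := by
    rw [map_sub]; abel
  have h3 : (X : R[X]) + C (ℏ • p) + C (ℏ • q) = X + C (ℏ • p + ℏ • q) := by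
    rw [map_add, add_assoc]
  have h4 : (X : R[X]) - C e = X + C (-e) := by rw [map_neg, sub_eq_add_neg]
  have hcomm : ((X : R[X]) - C e) * C (1 - s) = C (1 - s) * (X - C e) := by
    rw [sub_mul, mul_sub, Polynomial.X_mul_C, ← map_mul, ← map_mul, he, Algebra.commutes]
  rw [h1, h2, h3, mul_assoc, hcomm, mul_assoc, lin_mul, h4, lin_mul]
  have hβ : ℏ • p - e + ℏ • q = -e + (ℏ • p + ℏ • q) := by abel
  rw [hβ]
  have hγ : (1 - s) * ((ℏ • p - e) * (ℏ • q)) = (1 - s) * (-e * (ℏ • p + ℏ • q)) := by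
    have h5 : (ℏ • p - e) * (ℏ • q) = (ℏ * ℏ) • ((p - 1) * q) := by
      rw [he, Algebra.algebraMap_eq_smul_one, ← smul_sub, smul_mul_smul_comm]
    have h6 : (-e) * (ℏ • p + ℏ • q) = (ℏ * ℏ) • (-(p + q)) := by
      rw [he, Algebra.algebraMap_eq_smul_one, ← smul_add, neg_mul, smul_mul_smul_comm, one_mul,
        ← smul_neg]
    rw [h5, h6, mul_smul_comm, mul_smul_comm]
    congr 1
    have h7 : (p - 1) * q = p * q + p + -(p + q) := by rw [sub_mul, one_mul]; abel
    rw [h7, mul_add, key, zero_add]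
  rw [mul_add, mul_add, mul_add, mul_add, ← map_mul, ← map_mul, hγ]
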